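/- In the free product G = ⟨a⟩ * ⟨b⟩ of two cyclic groups of order two, every element of G is a product of at most two palindromes (reduced words equal to their reverses), and some element of G is not itself a palindrome; hence the palindromic width of G equals 2. -/

import Mathlib

open Monoid Monoid.CoprodI

attribute [local instance] Classical.propDecidable

/-- The list of syllables of the reduced word representing `g`. -/
noncomputable def syllables {ι : Type*} {M : ι → Type*} [∀ i, Group (M i)]
    (g : CoprodI M) : List (Σ i, M i) :=
  letI := Classical.decEq ι
  letI : ∀ i, DecidableEq (M i) := fun _ => Classical.decEq _
  (Word.equiv g).toList

/-- `g` is a palindrome iff its reduced word reads the same backwards. -/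
noncomputable def IsPalindrome {ι : Type*} {M : ι → Type*} [∀ i, Group (M i)]
    (g : CoprodI M) : Prop :=
  (syllables g).reverse = syllables g

theorem syllables_prod {ι : Type*} {M : ι → Type*} [∀ i, Group (M i)]
    (w : Word M) : syllables (Word.prod w) = w.toList := by
  letI := Classical.decEq ι
  letI : ∀ i, DecidableEq (M i) := fun _ => Classical.decEq _
  show (Word.equiv (Word.equiv.symm w)).toList = w.toList
  rw [Equiv.apply_symm_apply]

/-- In a group of cardinality two, any two nonidentity elements are equal. -/
theorem eq_of_ne_one_of_card_two {G : Type*} [Group G] (h : Nat.card G = 2)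
    {x y : G} (hx : x ≠ 1) (hy : y ≠ 1) : x = y := by
  obtain ⟨c, d, hcd, huniv⟩ := Nat.card_eq_two_iff.mp h
  have hmem : ∀ z : G, z = c ∨ z = d := by
    intro z
    have : z ∈ ({c, d} : Set G) := huniv ▸ Set.mem_univ z
    simpa using this
  rcases hmem 1 with h1 | h1
  · rcases hmem x with hx' | hx'
    · exact absurd (hx'.trans h1.symm) hx
    · rcases hmem y with hy' | hy'
      · exact absurd (hy'.trans h1.symm) hy
      · rw [hx', hy']
  · rcases hmem x with hx' | hx'
    · rcases hmem y with hy' | hy'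
      · rw [hx', hy']
      · exact absurd (hy'.trans h1.symm) hy
    · exact absurd (hx'.trans h1.symm) hx

/-- Uniqueness of alternating reduced lists over `Bool` of the same length with same head index. -/
theorem reduced_list_unique {M : Bool → Type*} [∀ b, Group (M b)]
    (hcard : ∀ i, Nat.card (M i) = 2) :
    ∀ (l₁ l₂ : List (Σ i, M i)),
      l₁.Chain' (fun a b => a.1 ≠ b.1) → l₂.Chain' (fun a b => a.1 ≠ b.1) →
      (∀ x ∈ l₁, x.2 ≠ 1) → (∀ x ∈ l₂, x.2 ≠ 1) →
      l₁.length = l₂.length →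
      l₁.head?.map Sigma.fst = l₂.head?.map Sigma.fst → l₁ = l₂ := by
  intro l₁
  induction l₁ with
  | nil =>
    intro l₂ _ _ _ _ hlen _
    exact (List.length_eq_zero_iff.mp hlen.symm).symm
  | cons x t₁ ih =>
    intro l₂ hc₁ hc₂ hn₁ hn₂ hlen hhead
    cases l₂ with
    | nil => simp at hlen
    | cons y t₂ =>
      simp only [List.head?_cons, Option.map_some] at hhead
      have hxy1 : x.1 = y.1 := Option.some_injective _ hhead
      obtain ⟨i, mx⟩ := x
      obtain ⟨j, my⟩ := y
      cases hxy1
      have hm : mx = my :=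
        eq_of_ne_one_of_card_two (hcard i)
          (hn₁ ⟨i, mx⟩ (List.mem_cons_self)) (hn₂ ⟨i, my⟩ (List.mem_cons_self))
      cases hm
      have hteq : t₁ = t₂ := by
        apply ih t₂ hc₁.tail hc₂.tail
          (fun z hz => hn₁ z (List.mem_cons_of_mem _ hz))
          (fun z hz => hn₂ z (List.mem_cons_of_mem _ hz))
          (by simpa using hlen)
        cases t₁ with
        | nil =>
          have : t₂ = [] := by simpa using hlen
          simp [this]
        | cons a s₁ =>
          cases t₂ with
          | nil => simp at hlen
          | cons b s₂ =>
            have ha : a.1 ≠ i := fun h => (List.isChain_cons_cons.mp hc₁).1 h.symm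
            have hb : b.1 ≠ i := fun h => (List.isChain_cons_cons.mp hc₂).1 h.symm
            have hab : a.1 = b.1 := by
              revert ha hb
              cases a.1 <;> cases b.1 <;> cases i <;> simp
            simp [hab]
      rw [hteq]

/-- In an alternating list over Bool, the last index is determined by head and parity. -/
theorem alt_getLast_idx {M : Bool → Type*} :
    ∀ (l : List (Σ i, M i)), l.Chain' (fun a b => a.1 ≠ b.1) → ∀ (hne : l ≠ []),
    (l.getLast hne).1 = if Even l.length then !(l.head hne).1 else (l.head hne).1 := by
  intro l
  induction l with
  | nil => intro _ h; exact absurd rfl h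
  | cons x t ih =>
    intro hc hne
    cases t with
    | nil => simp
    | cons y s =>
      have htne : (y :: s) ≠ [] := by simp
      have hyx : ((y :: s).head htne).1 = !x.1 := by
        have hne' := (List.isChain_cons_cons.mp hc).1
        simp only [List.head_cons]
        revert hne'
        cases x.1 <;> cases y.1 <;> simp
      have hIH := ih (List.isChain_cons_cons.mp hc).2 htne
      rw [List.getLast_cons htne, hIH, hyx]
      simp only [List.head_cons, List.length_cons]
      by_cases h : Even (s.length + 1)
      · have h2 : ¬ Even (s.length + 1 + 1) := by
          simp [Nat.even_add_one, h]
        simp [h, h2]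
      · have h2 : Even (s.length + 1 + 1) := by
          simp [Nat.even_add_one, h]
        simp [h, h2]

theorem alt_getLast_idx_odd {M : Bool → Type*}
    (l : List (Σ i, M i)) (hc : l.Chain' (fun a b => a.1 ≠ b.1)) (hne : l ≠ [])
    (hodd : ¬ Even l.length) : (l.getLast hne).1 = (l.head hne).1 := by
  rw [alt_getLast_idx l hc hne, if_neg hodd]

/-- Any reduced word of odd length over our groups is a palindrome (as a list). -/
theorem odd_reverse_eq {M : Bool → Type*} [∀ b, Group (M b)]
    (hcard : ∀ i, Nat.card (M i) = 2)
    (l : List (Σ i, M i)) (hc : l.Chain' (fun a b => a.1 ≠ b.1))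
    (hn : ∀ x ∈ l, x.2 ≠ 1) (hodd : ¬ Even l.length) :
    l.reverse = l := by
  have hne : l ≠ [] := by
    intro h; subst h; simp at hodd
  apply reduced_list_unique hcard
  · rw [show List.Chain' _ l.reverse = List.IsChain _ l.reverse from rfl, List.isChain_reverse]
    exact hc.imp fun _ _ h => h.symm
  · exact hc
  · intro x hx; exact hn x (List.mem_reverse.mp hx)
  · exact hn
  · simp
  · rw [List.head?_reverse, List.getLast?_eq_getLast hne, List.head?_eq_head hne]
    simp [alt_getLast_idx_odd l hc hne hodd]

/-- In the free product of two cyclic groups of order two, every element is a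
product of at most two palindromes, and some element is not a palindrome:
the palindromic width is two. -/
theorem palindromic_width_two_of_Z2_star_Z2 {M : Bool → Type*} [∀ b, Group (M b)]
    (hA : Nat.card (M true) = 2) (hB : Nat.card (M false) = 2) :
    (∀ g : CoprodI M, ∃ p q : CoprodI M, IsPalindrome p ∧ IsPalindrome q ∧ g = p * q) ∧
    (∃ g : CoprodI M, ¬ IsPalindrome g) := by
  letI := Classical.decEq Bool
  letI : ∀ i, DecidableEq (M i) := fun _ => Classical.decEq _
  have hcard : ∀ i : Bool, Nat.card (M i) = 2 := by
    intro i; cases i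
    · exact hB
    · exact hA
  have hpal1 : IsPalindrome (1 : CoprodI M) := by
    have h1 : syllables (1 : CoprodI M) = [] := by
      have := syllables_prod (Word.empty : Word M)
      rwa [Word.prod_empty] at this
    unfold IsPalindrome
    rw [h1]
    rfl
  constructor
  · intro g
    have hg : Word.prod (Word.equiv g) = g := Word.equiv.symm_apply_apply g
    set w := Word.equiv g with hwdef
    set l := w.toList with hldef
    have hsyl : syllables g = l := by
      rw [← hg, syllables_prod]
    by_cases hodd : Even l.length
    · -- even length
      by_cases hnil : l = []
      · refine ⟨1, 1, hpal1, hpal1, ?_⟩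
        have : g = Word.prod w := hg.symm
        rw [this]
        show Word.prod w = 1 * 1
        rw [one_mul]
        have : w = Word.empty := Word.ext (by simp [← hldef, hnil])
        rw [this, Word.prod_empty]
      · set x := l.getLast hnil with hxdef
        have hsplit : l.dropLast ++ [x] = l := List.dropLast_append_getLast hnil
        have hxne : x.2 ≠ 1 := w.ne_one x (List.getLast_mem hnil)
        let w₁ : Word M :=
          ⟨l.dropLast, fun z hz => w.ne_one z (List.dropLast_sublist l |>.mem hz),
            w.chain_ne.prefix (List.dropLast_prefix l)⟩
        let w₂ : Word M := ⟨[x], (by simpa using hxne), List.isChain_singleton _⟩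
        refine ⟨Word.prod w₁, Word.prod w₂, ?_, ?_, ?_⟩
        · unfold IsPalindrome
          rw [syllables_prod]
          show (l.dropLast).reverse = l.dropLast
          apply odd_reverse_eq hcard
          · exact w.chain_ne.prefix (List.dropLast_prefix l)
          · exact fun z hz => w.ne_one z (List.dropLast_sublist l |>.mem hz)
          · rw [List.length_dropLast]
            have hlpos : 0 < l.length := List.length_pos_iff.mpr hnil
            exact Nat.not_even_iff_odd.mpr (Nat.Even.sub_odd hlpos hodd odd_one)
        · unfold IsPalindrome
          rw [syllables_prod]
          rfl
        · rw [← hg]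
          show Word.prod w = Word.prod w₁ * Word.prod w₂
          unfold Word.prod
          show (l.map fun z => of z.2).prod = _
          rw [← hsplit, List.map_append, List.prod_append]
      -- done even case
    · -- odd length: g itself is a palindrome
      refine ⟨g, 1, ?_, hpal1, (mul_one g).symm⟩
      unfold IsPalindrome
      rw [hsyl]
      exact odd_reverse_eq hcard l w.chain_ne w.ne_one hodd
  · -- some element is not a palindrome
    have hta : ∃ a : M true, a ≠ 1 := by
      obtain ⟨y, hy, -⟩ := (Nat.card_eq_two_iff' (1 : M true)).mp hA
      exact ⟨y, hy⟩
    have htb : ∃ b : M false, b ≠ 1 := by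
      obtain ⟨y, hy, -⟩ := (Nat.card_eq_two_iff' (1 : M false)).mp hB
      exact ⟨y, hy⟩
    obtain ⟨a, ha⟩ := hta
    obtain ⟨b, hb⟩ := htb
    let w₃ : Word M :=
      ⟨[⟨true, a⟩, ⟨false, b⟩], (by simpa using ⟨ha, hb⟩),
        List.isChain_cons_cons.mpr ⟨by simp, List.isChain_singleton _⟩⟩
    refine ⟨Word.prod w₃, ?_⟩
    unfold IsPalindrome
    rw [syllables_prod]
    intro h
    have h2 := congrArg (fun t => t.head?.map Sigma.fst) h
    simp [w₃] at h2
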